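/- Let $p$ be an odd prime, $q$ a power of $p$, and $n$ a positive integer divisible by $p$. Then there exists an element $\beta \in \mathbb{F}_{q^n} \setminus \mathbb{F}_q$ such that $\beta^q + \beta^{q^{n-1}} - 2\beta = 0$. -/

import Mathlib

open Polynomial Finset

theorem stmt_0 (p s n q : ℕ) (hp : p.Prime) (hodd : p ≠ 2) (hs : 0 < s)
    (hq : q = p ^ s) (hn : 0 < n) (hpn : p ∣ n)
    (Fq F : Type*) [Field Fq] [Field F] [Fintype Fq] [Fintype F] [Algebra Fq F]
    (hcardq : Fintype.card Fq = q) (hcardF : Fintype.card F = q ^ n) :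
    ∃ β : F, β ∉ Set.range (algebraMap Fq F) ∧
      β ^ q + β ^ (q ^ (n - 1)) - 2 * β = 0 := by
  haveI := Fact.mk hp
  -- basic facts about q
  have hq1 : 1 < q := by
    subst hq; exact Nat.one_lt_pow hs.ne' hp.one_lt
  -- characteristic of F is p
  haveI : CharP F p := by
    obtain ⟨r, -, m, hr, hm⟩ := FiniteField.card' (K := F)
    haveI := Fact.mk hr
    haveI : CharP F r := by
      obtain ⟨r', hr'⟩ := CharP.exists F
      haveI := hr'
      obtain ⟨m', hrp', hm'⟩ := FiniteField.card F r'
      have : r' = r := by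
        have h1 : r' ∣ r ^ (m : ℕ) := by
          rw [← hm, hm']; exact dvd_pow_self r' m'.2.ne'
        have := hrp'.dvd_of_dvd_pow h1
        exact ((Nat.prime_dvd_prime_iff_eq hrp' hr).1 this)
      rwa [this] at hr'
    have hpr : p = r := by
      have h1 : p ∣ r ^ (m : ℕ) := by
        rw [← hm, hcardF, hq, ← pow_mul]; exact dvd_pow_self p (by positivity)
      exact (Nat.prime_dvd_prime_iff_eq hp hr).1 (hp.dvd_of_dvd_pow h1)
    rwa [hpr]
  -- the q-power Frobenius as a ring hom
  set φ : F →+* F := iterateFrobenius F p s with hφdef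
  have hφ : ∀ x : F, φ x = x ^ q := fun x => by
    rw [hφdef, iterateFrobenius_def, hq]
  have hFn : ∀ x : F, x ^ q ^ n = x := fun x => by
    rw [← hcardF]; exact FiniteField.pow_card x
  have hFq : ∀ a : Fq, a ^ q = a := fun a => by
    rw [← hcardq]; exact FiniteField.pow_card a
  have hFqi : ∀ (a : Fq) (i : ℕ), a ^ q ^ i = a := by
    intro a i
    induction i with
    | zero => simp
    | succ i ih => rw [pow_succ, pow_mul, ih, hFq]
  -- the trace-like map τ
  have hshift : ∀ x : F, ∑ i ∈ Finset.range n, x ^ q ^ (i + 1)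
      = ∑ i ∈ Finset.range n, x ^ q ^ i := by
    intro x
    have h1 := Finset.sum_range_succ' (fun i => x ^ q ^ i) n
    have h2 := Finset.sum_range_succ (fun i => x ^ q ^ i) n
    rw [h2] at h1
    have : x ^ q ^ n = x ^ q ^ 0 := by rw [hFn, pow_zero, pow_one]
    rw [this] at h1
    exact (add_right_cancel h1).symm
  set τ : F → F := fun x => ∑ i ∈ Finset.range n, x ^ q ^ i with hτdef
  have hτpow : ∀ x : F, (τ x) ^ q = τ x := by
    intro x
    show (∑ i ∈ Finset.range n, x ^ q ^ i) ^ q = ∑ i ∈ Finset.range n, x ^ q ^ i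
    rw [← hφ, map_sum]
    calc ∑ i ∈ Finset.range n, φ (x ^ q ^ i)
        = ∑ i ∈ Finset.range n, x ^ q ^ (i + 1) := by
          refine Finset.sum_congr rfl fun i _ => ?_
          rw [hφ, ← pow_mul, ← pow_succ]
      _ = ∑ i ∈ Finset.range n, x ^ q ^ i := hshift x
  -- fixed points of x ↦ x^q are exactly the image of Fq
  have hfix : ∀ x : F, x ^ q = x → x ∈ Set.range (algebraMap Fq F) := by
    intro x hx
    classical
    set f : F[X] := X ^ q - X with hfdef
    have hfne : f ≠ 0 := by
      intro h
      have : f.coeff q = 0 := by rw [h]; simp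
      rw [hfdef, coeff_sub, coeff_X_pow, coeff_X, if_pos rfl,
        if_neg (by omega)] at this
      simpa using this
    have hdeg : f.natDegree ≤ q := by
      refine le_trans (natDegree_sub_le _ _) ?_
      simp [natDegree_X_pow, natDegree_X]; omega
    set T : Finset F := f.roots.toFinset with hTdef
    set R : Finset F := Finset.univ.image (algebraMap Fq F) with hRdef
    have hRT : R ⊆ T := by
      intro y hy
      rw [hRdef] at hy
      obtain ⟨b, _, rfl⟩ := Finset.mem_image.1 hy
      rw [hTdef, Multiset.mem_toFinset, mem_roots hfne]
      rw [hfdef]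
      simp only [IsRoot.def, eval_sub, eval_pow, eval_X]
      rw [← map_pow, hFq, sub_self]
    have hTcard : T.card ≤ q :=
      le_trans (Multiset.toFinset_card_le _) (le_trans (f.card_roots') hdeg)
    have hRcard : R.card = q := by
      rw [hRdef, Finset.card_image_of_injective _ (algebraMap Fq F).injective,
        Finset.card_univ, hcardq]
    have hRTeq : R = T := Finset.eq_of_subset_of_card_le hRT (by omega)
    have hxT : x ∈ T := by
      rw [hTdef, Multiset.mem_toFinset, mem_roots hfne, hfdef]
      simp [IsRoot.def, hx]
    rw [← hRTeq, hRdef] at hxT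
    obtain ⟨b, _, hb⟩ := Finset.mem_image.1 hxT
    exact ⟨b, hb⟩
  -- τ is Fq-semilinear in the appropriate sense
  have hτmul : ∀ (a : Fq) (x : F),
      τ (algebraMap Fq F a * x) = algebraMap Fq F a * τ x := by
    intro a x
    show ∑ i ∈ Finset.range n, (algebraMap Fq F a * x) ^ q ^ i
      = algebraMap Fq F a * ∑ i ∈ Finset.range n, x ^ q ^ i
    rw [Finset.mul_sum]
    refine Finset.sum_congr rfl fun i _ => ?_
    rw [mul_pow, ← map_pow, hFqi]
  -- existence of an element with nonzero "trace"
  have hθ0 : ∃ θ0 : F, τ θ0 ≠ 0 := by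
    classical
    set g : F[X] := ∑ i ∈ Finset.range n, X ^ q ^ i with hgdef
    have hgeval : ∀ x : F, g.eval x = τ x := by
      intro x
      rw [hgdef, eval_finset_sum]
      simp [hτdef]
    have hgne : g ≠ 0 := by
      intro h
      have hc : g.coeff 1 = 0 := by rw [h]; simp
      rw [hgdef, finset_sum_coeff] at hc
      have : ∀ i ∈ Finset.range n, (X ^ q ^ i : F[X]).coeff 1 =
          if i = 0 then 1 else 0 := by
        intro i _
        rw [coeff_X_pow]
        by_cases hi : i = 0
        · simp [hi]
        · rw [if_neg hi, if_neg]
          intro h1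
          have : q ^ i > 1 := by
            calc 1 < q := hq1
            _ ≤ q ^ i := Nat.le_self_pow hi q
          omega
      rw [Finset.sum_congr rfl this, Finset.sum_ite_eq' _ 0 (fun _ => (1 : F)),
        if_pos (Finset.mem_range.2 hn)] at hc
      simpa using hc
    have hgdeg : g.natDegree < Fintype.card F := by
      have h1 : g.natDegree ≤ q ^ (n - 1) := by
        refine natDegree_sum_le_of_forall_le _ _ fun i hi => ?_
        rw [natDegree_X_pow]
        exact Nat.pow_le_pow_right (by omega) (by
          have := Finset.mem_range.1 hi; omega)
      have h2 : q ^ (n - 1) < q ^ n := Nat.pow_lt_pow_right hq1 (by omega)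
      rw [hcardF]; omega
    obtain ⟨x, hx⟩ := g.exists_eval_ne_zero_of_natDegree_lt_card hgne (by
      rw [Cardinal.mk_fintype]; exact_mod_cast hgdeg)
    exact ⟨x, by rwa [hgeval] at hx⟩
  obtain ⟨θ0, hθ0⟩ := hθ0
  -- normalize to get τ θ = 1
  obtain ⟨c0, hc0⟩ := hfix (τ θ0) (hτpow θ0)
  have hc0ne : c0 ≠ 0 := by
    intro h; rw [h, map_zero] at hc0; exact hθ0 hc0.symm
  set θ : F := algebraMap Fq F c0⁻¹ * θ0 with hθdef
  have hτθ : τ θ = 1 := by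
    rw [hθdef, hτmul, ← hc0, ← map_mul, inv_mul_cancel₀ hc0ne, map_one]
  -- n = 0 in F
  have hnF : (n : F) = 0 := (CharP.cast_eq_zero_iff F p n).2 hpn
  -- the key element β
  set β : F := ∑ i ∈ Finset.range n, i • θ ^ q ^ i with hβdef
  have hβq : β ^ q = β - 1 := by
    have h1 : β ^ q = ∑ i ∈ Finset.range n, i • θ ^ q ^ (i + 1) := by
      rw [← hφ, hβdef, map_sum]
      refine Finset.sum_congr rfl fun i _ => ?_
      rw [map_nsmul, hφ, ← pow_mul, ← pow_succ]
    have h2 : β ^ q + τ θ = ∑ i ∈ Finset.range n, (i + 1) • θ ^ q ^ (i + 1) := by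
      rw [h1]
      show (∑ i ∈ Finset.range n, i • θ ^ q ^ (i + 1))
          + ∑ i ∈ Finset.range n, θ ^ q ^ i = _
      rw [← hshift θ, ← Finset.sum_add_distrib]
      exact Finset.sum_congr rfl fun i _ => (succ_nsmul _ _).symm
    have h3 : ∑ i ∈ Finset.range n, (i + 1) • θ ^ q ^ (i + 1) = β := by
      have h4 := Finset.sum_range_succ' (fun i => i • θ ^ q ^ i) n
      have h5 := Finset.sum_range_succ (fun i => i • θ ^ q ^ i) n
      rw [h5] at h4
      simp only [zero_smul, add_zero] at h4
      have hz : n • θ ^ q ^ n = 0 := by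
        rw [hFn, nsmul_eq_mul, hnF, zero_mul]
      rw [hz, add_zero] at h4
      rw [hβdef]
      exact h4.symm
    rw [hτθ] at h2
    have := h2.trans h3
    linear_combination this
  have hβk : ∀ k : ℕ, β ^ q ^ k = β - (k : F) := by
    intro k
    induction k with
    | zero => simp
    | succ k ih =>
      rw [pow_succ, pow_mul, ih, ← hφ, map_sub, hφ, hβq, map_natCast]
      push_cast
      ring
  refine ⟨β, ?_, ?_⟩
  · rintro ⟨b, hb⟩
    have h1 : β ^ q = β := by
      rw [← hb, ← map_pow, hFq]
    rw [hβq] at h1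
    have : (1 : F) = 0 := by linear_combination -h1
    exact one_ne_zero this
  · have h1 : β ^ q ^ (n - 1) = β + 1 := by
      rw [hβk (n - 1), Nat.cast_sub hn]
      rw [hnF]
      push_cast
      ring
    have h2 : β ^ q = β - 1 := by
      conv_lhs => rw [← pow_one q]
      rw [hβk 1]
      push_cast
      ring
    rw [h1, h2]
    ring
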